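/- With G ~ Gamma(N,1) independent of nonnegative I and J where E[(I+J)^N] < ∞ and J > 0 a.s. with E[J^k I^{N-k}] < ∞ and E[J I^{N-1}] > 0, the difference Pr(G > f(τ)I) − Pr(G > f(τ)(I+J)) = Θ(τ^N) as τ → 0⁺, where f(τ) = 2^{cτ} − 1, c > 0. -/

import Mathlib

open MeasureTheory Real Filter ProbabilityTheory Set

noncomputable def gpdf (N : ℕ) (x : ℝ) : ℝ := x ^ (N - 1) * Real.exp (-x) / (N - 1).factorial

lemma gpdf_cont (N : ℕ) : Continuous (gpdf N) := by
  unfold gpdf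
  fun_prop

lemma gpdf_nonneg (N : ℕ) {x : ℝ} (hx : 0 ≤ x) : 0 ≤ gpdf N x := by
  unfold gpdf
  positivity

lemma gpdf_int (N : ℕ) (hN : 1 ≤ N) (s : ℝ) : IntegrableOn (gpdf N) (Set.Ioi s) := by
  have h0 : IntegrableOn (gpdf N) (Set.Ioi 0) := by
    have h := Real.GammaIntegral_convergent (s := (N : ℝ)) (by positivity)
    have h2 : IntegrableOn (fun x : ℝ => x ^ (N - 1) * Real.exp (-x)) (Set.Ioi 0) := by
      refine (h.congr_fun ?_ measurableSet_Ioi)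
      intro x hx
      have : ((N : ℝ) - 1) = ((N - 1 : ℕ) : ℝ) := by
        have := Nat.cast_sub hN (R := ℝ); push_cast at this ⊢; linarith [this]
      simp only [this, Real.rpow_natCast]
      ring
    have := h2.div_const ((N - 1).factorial : ℝ)
    exact this
  rcases le_or_gt 0 s with hs | hs
  · exact h0.mono_set (Set.Ioi_subset_Ioi hs)
  · have : Set.Ioi s = Set.Ioc s 0 ∪ Set.Ioi 0 := (Set.Ioc_union_Ioi_eq_Ioi hs.le).symm
    rw [this]
    exact ((gpdf_cont N).integrableOn_Ioc).union h0

noncomputable def Fbar (N : ℕ) (s : ℝ) : ℝ := ∫ x in Set.Ioi (max s 0), gpdf N x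

lemma Fbar_anti (N : ℕ) (hN : 1 ≤ N) : Antitone (Fbar N) := by
  intro s t hst
  apply setIntegral_mono_set (gpdf_int N hN _)
  · filter_upwards [ae_restrict_mem measurableSet_Ioi] with x hx
    exact gpdf_nonneg N (le_trans (le_max_right s 0) (le_of_lt hx))
  · exact (Set.Ioi_subset_Ioi (max_le_max hst le_rfl)).eventuallyLE

lemma Fbar_meas (N : ℕ) (hN : 1 ≤ N) : Measurable (Fbar N) := (Fbar_anti N hN).measurable

lemma Fbar_sub (N : ℕ) (hN : 1 ≤ N) {a b : ℝ} (ha : 0 ≤ a) (hab : a ≤ b) :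
    Fbar N a - Fbar N b = ∫ x in Set.Ioc a b, gpdf N x := by
  have hb : 0 ≤ b := le_trans ha hab
  have h1 : Set.Ioi a = Set.Ioc a b ∪ Set.Ioi b := (Set.Ioc_union_Ioi_eq_Ioi hab).symm
  have h2 : ∫ x in Set.Ioi a, gpdf N x
      = (∫ x in Set.Ioc a b, gpdf N x) + ∫ x in Set.Ioi b, gpdf N x := by
    rw [h1]
    exact setIntegral_union (Set.Ioc_disjoint_Ioi le_rfl) measurableSet_Ioi
      ((gpdf_int N hN a).mono_set (h1 ▸ Set.subset_union_left))
      (gpdf_int N hN b)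
  unfold Fbar
  rw [max_eq_left ha, max_eq_left hb]
  linarith

lemma pow_int_Ioc (N : ℕ) (hN : 1 ≤ N) {a b : ℝ} (hab : a ≤ b) :
    ∫ x in Set.Ioc a b, x ^ (N - 1) = (b ^ N - a ^ N) / N := by
  rw [← intervalIntegral.integral_of_le hab, integral_pow]
  have h : N - 1 + 1 = N := by omega
  rw [h]
  congr 1
  have : ((N - 1 : ℕ) : ℝ) + 1 = N := by
    have := Nat.cast_sub hN (R := ℝ); push_cast at this ⊢; linarith
  rw [this]

lemma gpdf_Ioc_upper (N : ℕ) (hN : 1 ≤ N) {a b : ℝ} (ha : 0 ≤ a) (hab : a ≤ b) :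
    ∫ x in Set.Ioc a b, gpdf N x ≤ (b ^ N - a ^ N) / (N * (N - 1).factorial) := by
  have key : ∫ x in Set.Ioc a b, gpdf N x
      ≤ ∫ x in Set.Ioc a b, x ^ (N - 1) / (N - 1).factorial := by
    apply setIntegral_mono_on
    · exact (gpdf_int N hN a).mono_set Set.Ioc_subset_Ioi_self
    · exact ((continuous_pow _).div_const _).integrableOn_Ioc
    · exact measurableSet_Ioc
    · intro x hx
      unfold gpdf
      have hx0 : 0 ≤ x := le_trans ha hx.1.le
      have : Real.exp (-x) ≤ 1 := Real.exp_le_one_iff.mpr (by linarith)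
      have hf : (0:ℝ) < (N - 1).factorial := by positivity
      apply div_le_div_of_nonneg_right ?_ hf.le
      nlinarith [pow_nonneg hx0 (N-1)]
  calc ∫ x in Set.Ioc a b, gpdf N x ≤ _ := key
    _ = (∫ x in Set.Ioc a b, x ^ (N - 1)) / (N - 1).factorial := by
        rw [integral_div]
    _ = (b ^ N - a ^ N) / (N * (N - 1).factorial) := by
        rw [pow_int_Ioc N hN hab]
        field_simp

lemma gpdf_Ioc_lower (N : ℕ) (hN : 1 ≤ N) {a b : ℝ} (ha : 0 ≤ a) (hab : a ≤ b) :
    Real.exp (-b) * ((b ^ N - a ^ N) / (N * (N - 1).factorial))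
      ≤ ∫ x in Set.Ioc a b, gpdf N x := by
  have key : ∫ x in Set.Ioc a b, Real.exp (-b) * (x ^ (N - 1) / (N - 1).factorial)
      ≤ ∫ x in Set.Ioc a b, gpdf N x := by
    apply setIntegral_mono_on
    · exact (continuous_const.mul ((continuous_pow _).div_const _)).integrableOn_Ioc
    · exact (gpdf_int N hN a).mono_set Set.Ioc_subset_Ioi_self
    · exact measurableSet_Ioc
    · intro x hx
      unfold gpdf
      have hx0 : 0 ≤ x := le_trans ha hx.1.le
      have : Real.exp (-b) ≤ Real.exp (-x) := Real.exp_le_exp.mpr (by linarith [hx.2])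
      have hf : (0:ℝ) < (N - 1).factorial := by positivity
      rw [mul_div_assoc']
      apply div_le_div_of_nonneg_right ?_ hf.le
      nlinarith [pow_nonneg hx0 (N-1)]
  calc Real.exp (-b) * ((b ^ N - a ^ N) / (N * (N - 1).factorial))
      = ∫ x in Set.Ioc a b, Real.exp (-b) * (x ^ (N - 1) / (N - 1).factorial) := by
        rw [MeasureTheory.integral_const_mul, integral_div, pow_int_Ioc N hN hab]
        field_simp
    _ ≤ _ := key

lemma cond_prob {Ω : Type*} [MeasurableSpace Ω] (μ : Measure Ω) [IsProbabilityMeasure μ]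
    (N : ℕ) (hN : 1 ≤ N) (G X : Ω → ℝ) (hGm : Measurable G) (hXm : Measurable X)
    (hXnn : ∀ ω, 0 ≤ X ω) (hind : IndepFun G X μ)
    (hG : ∀ t : ℝ, 0 ≤ t →
      (μ {ω | G ω > t}).toReal
        = ∫ x in Set.Ioi t, x ^ (N - 1) * Real.exp (-x) / (N - 1).factorial)
    {t : ℝ} (ht : 0 ≤ t) :
    (μ {ω | G ω > t * X ω}).toReal = ∫ ω, Fbar N (t * X ω) ∂μ := by
  have hmap : Measure.map (fun ω => (G ω, X ω)) μ = (Measure.map G μ).prod (Measure.map X μ) :=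
    (indepFun_iff_map_prod_eq_prod_map_map hGm.aemeasurable hXm.aemeasurable).mp hind
  have hsm : MeasurableSet {p : ℝ × ℝ | p.1 > t * p.2} :=
    measurableSet_lt (measurable_const.mul measurable_snd) measurable_fst
  have h1 : μ {ω | G ω > t * X ω}
      = (Measure.map (fun ω => (G ω, X ω)) μ) {p : ℝ × ℝ | p.1 > t * p.2} := by
    rw [Measure.map_apply (hGm.prodMk hXm) hsm]
    rfl
  have h2 : (Measure.map (fun ω => (G ω, X ω)) μ) {p : ℝ × ℝ | p.1 > t * p.2}
      = ∫⁻ x, (Measure.map G μ) (Set.Ioi (t * x)) ∂(Measure.map X μ) := by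
    have hset : ∀ x : ℝ, ((fun g => (g, x)) ⁻¹' {p : ℝ × ℝ | p.1 > t * p.2}) = Set.Ioi (t * x) := by
      intro x; ext y; simp [Set.mem_Ioi, gt_iff_lt]
    rw [hmap, Measure.prod_apply_symm hsm]
    simp_rw [hset]
  have hFmeas : Measurable fun x : ℝ => (Measure.map G μ) (Set.Ioi (t * x)) := by
    have hset : ∀ x : ℝ, ((fun g => (g, x)) ⁻¹' {p : ℝ × ℝ | p.1 > t * p.2}) = Set.Ioi (t * x) := by
      intro x; ext y; simp [Set.mem_Ioi, gt_iff_lt]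
    have := measurable_measure_prodMk_right (μ := Measure.map G μ) (β := ℝ) hsm
    simp_rw [hset] at this
    exact this
  have hfin : ∀ᵐ x ∂(Measure.map X μ), (Measure.map G μ) (Set.Ioi (t * x)) < ⊤ :=
    Filter.Eventually.of_forall fun x =>
      lt_of_le_of_lt prob_le_one ENNReal.one_lt_top
  have h3 : (∫⁻ x, (Measure.map G μ) (Set.Ioi (t * x)) ∂(Measure.map X μ)).toReal
      = ∫ x, ((Measure.map G μ) (Set.Ioi (t * x))).toReal ∂(Measure.map X μ) :=
    (integral_toReal hFmeas.aemeasurable hfin).symm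
  have hXpos : ∀ᵐ x ∂(Measure.map X μ), 0 ≤ x := by
    rw [ae_map_iff hXm.aemeasurable measurableSet_Ici]
    exact Filter.Eventually.of_forall hXnn
  have h4 : ∫ x, ((Measure.map G μ) (Set.Ioi (t * x))).toReal ∂(Measure.map X μ)
      = ∫ x, Fbar N (t * x) ∂(Measure.map X μ) := by
    apply integral_congr_ae
    filter_upwards [hXpos] with x hx
    have htx : 0 ≤ t * x := mul_nonneg ht hx
    rw [Measure.map_apply hGm measurableSet_Ioi]
    have : G ⁻¹' Set.Ioi (t * x) = {ω | G ω > t * x} := by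
      ext ω
      simp [Set.mem_Ioi, gt_iff_lt]
    rw [this, hG _ htx]
    unfold Fbar gpdf
    rw [max_eq_left htx]
  have h5 : ∫ x, Fbar N (t * x) ∂(Measure.map X μ) = ∫ ω, Fbar N (t * X ω) ∂μ := by
    apply integral_map hXm.aemeasurable
    exact ((Fbar_meas N hN).comp (measurable_const.mul measurable_id)).aestronglyMeasurable
  rw [h1, h2, h3, h4, h5]

lemma Fbar_bounds (N : ℕ) (hN : 1 ≤ N) (s : ℝ) : 0 ≤ Fbar N s ∧ Fbar N s ≤ Fbar N 0 := by
  constructor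
  · apply setIntegral_nonneg measurableSet_Ioi
    intro x hx
    exact gpdf_nonneg N (le_trans (le_max_right s 0) (le_of_lt hx))
  · apply setIntegral_mono_set (by simpa using gpdf_int N hN 0)
    · filter_upwards [ae_restrict_mem measurableSet_Ioi] with x hx
      exact gpdf_nonneg N (by simp at hx; exact hx.le)
    · exact (Set.Ioi_subset_Ioi (by simp [le_max_right])).eventuallyLE

lemma Fbar_integrable {Ω : Type*} [MeasurableSpace Ω] (μ : Measure Ω) [IsProbabilityMeasure μ]
    (N : ℕ) (hN : 1 ≤ N) (X : Ω → ℝ) (hXm : Measurable X) (t : ℝ) :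
    Integrable (fun ω => Fbar N (t * X ω)) μ := by
  apply Integrable.mono' (integrable_const (Fbar N 0))
  · exact ((Fbar_meas N hN).comp (measurable_const.mul hXm)).aestronglyMeasurable
  · refine Filter.Eventually.of_forall fun ω => ?_
    rw [Real.norm_eq_abs, abs_of_nonneg (Fbar_bounds N hN _).1]
    exact (Fbar_bounds N hN _).2


/-- The coverage gain from nulling the dominant interferer J is Θ(τ^N):
Pr(G > f(τ)I) − Pr(G > f(τ)(I+J)) = Θ(τ^N) as τ → 0⁺, with f(τ) = 2^{cτ} − 1. -/
theorem stmt13 {Ω : Type*} [MeasurableSpace Ω] (μ : Measure Ω) [IsProbabilityMeasure μ]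
    (N : ℕ) (hN : 1 ≤ N) (c : ℝ) (hc : 0 < c) (G I J : Ω → ℝ)
    (hGm : Measurable G) (hIm : Measurable I) (hJm : Measurable J)
    (hInn : ∀ ω, 0 ≤ I ω) (hJnn : ∀ ω, 0 ≤ J ω) (hJpos : ∀ᵐ ω ∂μ, 0 < J ω)
    (hindep : IndepFun G (fun ω => (I ω, J ω)) μ)
    (hG : ∀ t : ℝ, 0 ≤ t →
      (μ {ω | G ω > t}).toReal
        = ∫ x in Set.Ioi t, x ^ (N - 1) * Real.exp (-x) / (N - 1).factorial)
    (hmomIJ : Integrable (fun ω => (I ω + J ω) ^ N) μ)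
    (hmomk : ∀ k ≤ N, Integrable (fun ω => J ω ^ k * I ω ^ (N - k)) μ)
    (hpos : 0 < ∫ ω, J ω * I ω ^ (N - 1) ∂μ) :
    ∃ K : ℝ, 0 < K ∧
      Filter.Tendsto (fun τ : ℝ =>
          ((μ {ω | G ω > ((2 : ℝ) ^ (c * τ) - 1) * I ω}).toReal
            - (μ {ω | G ω > ((2 : ℝ) ^ (c * τ) - 1) * (I ω + J ω)}).toReal) / τ ^ N)
        (nhdsWithin 0 (Set.Ioi 0)) (nhds K) := by
  classical
  set L : ℝ := c * Real.log 2 with hL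
  have hL0 : 0 < L := mul_pos hc (Real.log_pos one_lt_two)
  set D : ℝ := (N : ℝ) * (N - 1).factorial with hD
  have hD0 : 0 < D := by positivity
  set f : ℝ → ℝ := fun τ => (2 : ℝ) ^ (c * τ) - 1 with hf
  have hfeq : ∀ τ, f τ = Real.exp (L * τ) - 1 := by
    intro τ
    simp only [hf, Real.rpow_def_of_pos two_pos]
    rw [hL]; ring_nf
  -- f τ ≥ 0 for τ ≥ 0
  have hfnn : ∀ τ : ℝ, 0 ≤ τ → 0 ≤ f τ := by
    intro τ hτ
    rw [hfeq]
    have : (1:ℝ) ≤ Real.exp (L * τ) := Real.one_le_exp (by positivity)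
    linarith
  -- f τ / τ → L
  have hslope : Tendsto (fun τ => f τ / τ) (nhdsWithin 0 (Set.Ioi 0)) (nhds L) := by
    have hd : HasDerivAt (fun τ : ℝ => Real.exp (L * τ) - 1) L 0 := by
      have h1 : HasDerivAt (fun τ : ℝ => L * τ) L 0 := by
        simpa using (hasDerivAt_id (0:ℝ)).const_mul L
      have h2 := h1.exp
      simp only [mul_zero, Real.exp_zero, one_mul] at h2
      exact h2.sub_const 1
    have h3 := hasDerivAt_iff_tendsto_slope.mp hd
    have h4 : Tendsto (slope (fun τ : ℝ => Real.exp (L * τ) - 1) 0)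
        (nhdsWithin 0 (Set.Ioi 0)) (nhds L) :=
      h3.mono_left (nhdsWithin_mono 0 (fun x hx => ne_of_gt hx))
    apply h4.congr
    intro τ
    rw [slope_def_field, hfeq τ]
    simp
  -- f τ → 0
  have hf0 : Tendsto f (nhdsWithin 0 (Set.Ioi 0)) (nhds 0) := by
    have hcont : Continuous fun τ : ℝ => Real.exp (L * τ) - 1 := by fun_prop
    have h := (hcont.tendsto 0).mono_left (nhdsWithin_le_nhds (s := Set.Ioi 0))
    simp only [mul_zero, Real.exp_zero, sub_self] at h
    exact h.congr fun τ => (hfeq τ).symm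
  -- the A function
  set A : Ω → ℝ := fun ω => (I ω + J ω) ^ N - I ω ^ N with hA
  have hAnn : ∀ ω, 0 ≤ A ω := by
    intro ω
    have : I ω ^ N ≤ (I ω + J ω) ^ N :=
      pow_le_pow_left₀ (hInn ω) (by linarith [hJnn ω]) N
    simp [hA]; linarith
  have hIN : Integrable (fun ω => I ω ^ N) μ := by
    have := hmomk 0 (Nat.zero_le N)
    simpa using this
  have hAint : Integrable A μ := hmomIJ.sub hIN
  have hJIint : Integrable (fun ω => J ω * I ω ^ (N - 1)) μ := by
    have := hmomk 1 hN
    simpa using this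
  have hAgeJI : ∀ ω, J ω * I ω ^ (N - 1) ≤ A ω := by
    intro ω
    have h1 : I ω ^ (N - 1) ≤ (I ω + J ω) ^ (N - 1) :=
      pow_le_pow_left₀ (hInn ω) (by linarith [hJnn ω]) _
    have h2 : (I ω + J ω) ^ N = (I ω + J ω) * (I ω + J ω) ^ (N - 1) := by
      conv_lhs => rw [show N = (N - 1) + 1 by omega]
      ring
    have h3 : (I ω + J ω) * I ω ^ (N - 1) ≤ (I ω + J ω) * (I ω + J ω) ^ (N - 1) := by
      apply mul_le_mul_of_nonneg_left h1 (by linarith [hInn ω, hJnn ω])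
    have h4 : I ω * I ω ^ (N - 1) = I ω ^ N := by
      conv_rhs => rw [show N = (N - 1) + 1 by omega]
      ring
    simp only [hA]
    nlinarith
  have hIntA : 0 < ∫ ω, A ω ∂μ := by
    calc (0:ℝ) < ∫ ω, J ω * I ω ^ (N - 1) ∂μ := hpos
      _ ≤ ∫ ω, A ω ∂μ := integral_mono hJIint hAint hAgeJI
  refine ⟨L ^ N * (∫ ω, A ω ∂μ) / D, by positivity, ?_⟩
  -- independence for I and I + J
  have hindI : IndepFun G I μ := by
    have := hindep.comp measurable_id (measurable_fst : Measurable fun p : ℝ × ℝ => p.1)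
    exact this
  have hindIJ : IndepFun G (fun ω => I ω + J ω) μ := by
    have := hindep.comp measurable_id
      ((measurable_fst.add measurable_snd : Measurable fun p : ℝ × ℝ => p.1 + p.2))
    exact this
  -- F_τ
  set FF : ℝ → Ω → ℝ := fun τ ω =>
    (Fbar N (f τ * I ω) - Fbar N (f τ * (I ω + J ω))) / τ ^ N with hFF
  have hstep : ∀ τ ∈ Set.Ioi (0:ℝ),
      ((μ {ω | G ω > ((2 : ℝ) ^ (c * τ) - 1) * I ω}).toReal
            - (μ {ω | G ω > ((2 : ℝ) ^ (c * τ) - 1) * (I ω + J ω)}).toReal) / τ ^ N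
      = ∫ ω, FF τ ω ∂μ := by
    intro τ hτ
    have hτ0 : (0:ℝ) < τ := hτ
    have hft : 0 ≤ f τ := hfnn τ hτ0.le
    have e1 := cond_prob μ N hN G I hGm hIm hInn hindI hG hft
    have e2 := cond_prob μ N hN G (fun ω => I ω + J ω) hGm (hIm.add hJm)
      (fun ω => add_nonneg (hInn ω) (hJnn ω)) hindIJ hG hft
    simp only [hFF]
    rw [show ((2:ℝ) ^ (c * τ) - 1) = f τ from rfl, e1, e2,
      ← integral_sub (Fbar_integrable μ N hN I hIm (f τ))
        (Fbar_integrable μ N hN (fun ω => I ω + J ω) (hIm.add hJm) (f τ)), ← integral_div]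
  -- dominated convergence
  have hdct : Tendsto (fun τ => ∫ ω, FF τ ω ∂μ) (nhdsWithin 0 (Set.Ioi 0))
      (nhds (∫ ω, L ^ N * A ω / D ∂μ)) := by
    apply tendsto_integral_filter_of_dominated_convergence
      (bound := fun ω => (L + 1) ^ N * A ω / D)
    · refine Filter.Eventually.of_forall fun τ => ?_
      apply Measurable.aestronglyMeasurable
      exact (((Fbar_meas N hN).comp (measurable_const.mul hIm)).sub
        ((Fbar_meas N hN).comp (measurable_const.mul (hIm.add hJm)))).div_const _
    · -- bound
      have hev1 : ∀ᶠ τ in nhdsWithin 0 (Set.Ioi 0), f τ / τ ≤ L + 1 :=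
        hslope.eventually_le_const (by linarith)
      filter_upwards [hev1, eventually_mem_nhdsWithin] with τ hτle hτ
      refine Filter.Eventually.of_forall fun ω => ?_
      have hτ0 : (0:ℝ) < τ := hτ
      have hft : 0 ≤ f τ := hfnn τ hτ0.le
      have hab : f τ * I ω ≤ f τ * (I ω + J ω) :=
        mul_le_mul_of_nonneg_left (by linarith [hJnn ω]) hft
      have ha : 0 ≤ f τ * I ω := mul_nonneg hft (hInn ω)
      have hsub := Fbar_sub N hN ha hab
      have hnn : 0 ≤ Fbar N (f τ * I ω) - Fbar N (f τ * (I ω + J ω)) := by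
        rw [hsub]
        apply setIntegral_nonneg measurableSet_Ioc
        intro x hx
        exact gpdf_nonneg N (le_trans ha hx.1.le)
      have hup := gpdf_Ioc_upper N hN ha hab
      have hpowA : (f τ * (I ω + J ω)) ^ N - (f τ * I ω) ^ N = f τ ^ N * A ω := by
        simp only [hA, mul_pow]; ring
      have hFFnn : 0 ≤ FF τ ω := by
        simp only [hFF]
        positivity
      rw [Real.norm_eq_abs, abs_of_nonneg hFFnn]
      have step1 : FF τ ω ≤ (f τ ^ N * A ω / D) / τ ^ N := by
        simp only [hFF]
        apply div_le_div_of_nonneg_right ?_ (by positivity : (0:ℝ) < τ ^ N).le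
        rw [hsub]
        calc ∫ x in Set.Ioc (f τ * I ω) (f τ * (I ω + J ω)), gpdf N x
            ≤ ((f τ * (I ω + J ω)) ^ N - (f τ * I ω) ^ N) / D := hup
          _ = f τ ^ N * A ω / D := by rw [hpowA]
      calc FF τ ω ≤ (f τ ^ N * A ω / D) / τ ^ N := step1
        _ = (f τ / τ) ^ N * A ω / D := by
            rw [div_pow]
            ring
        _ ≤ (L + 1) ^ N * A ω / D := by
            have h1 : (f τ / τ) ^ N ≤ (L + 1) ^ N :=
              pow_le_pow_left₀ (div_nonneg hft hτ0.le) hτle N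
            have h2 := mul_le_mul_of_nonneg_right h1 (hAnn ω)
            exact div_le_div_of_nonneg_right h2 hD0.le
    · exact (hAint.const_mul _).div_const _
    · -- pointwise limit
      refine Filter.Eventually.of_forall fun ω => ?_
      have hlimU : Tendsto (fun τ => (f τ / τ) ^ N * A ω / D)
          (nhdsWithin 0 (Set.Ioi 0)) (nhds (L ^ N * A ω / D)) :=
        ((hslope.pow N).mul_const (A ω)).div_const D
      have hlimE : Tendsto (fun τ => Real.exp (-(f τ * (I ω + J ω))))
          (nhdsWithin 0 (Set.Ioi 0)) (nhds 1) := by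
        have h1 : Tendsto (fun τ => -(f τ * (I ω + J ω))) (nhdsWithin 0 (Set.Ioi 0)) (nhds 0) := by
          simpa using (hf0.mul_const (I ω + J ω)).neg
        have := (Real.continuous_exp.tendsto 0).comp h1
        simpa [Function.comp_def] using this
      have hlimL : Tendsto (fun τ => Real.exp (-(f τ * (I ω + J ω))) * ((f τ / τ) ^ N * A ω / D))
          (nhdsWithin 0 (Set.Ioi 0)) (nhds (L ^ N * A ω / D)) := by
        have := hlimE.mul hlimU
        simpa using this
      apply tendsto_of_tendsto_of_tendsto_of_le_of_le' hlimL hlimU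
      · filter_upwards [eventually_mem_nhdsWithin] with τ hτ
        have hτ0 : (0:ℝ) < τ := hτ
        have hft : 0 ≤ f τ := hfnn τ hτ0.le
        have hab : f τ * I ω ≤ f τ * (I ω + J ω) :=
          mul_le_mul_of_nonneg_left (by linarith [hJnn ω]) hft
        have ha : 0 ≤ f τ * I ω := mul_nonneg hft (hInn ω)
        have hsub := Fbar_sub N hN ha hab
        have hlow := gpdf_Ioc_lower N hN ha hab
        have hpowA : (f τ * (I ω + J ω)) ^ N - (f τ * I ω) ^ N = f τ ^ N * A ω := by
          simp only [hA, mul_pow]; ring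
        have key : Real.exp (-(f τ * (I ω + J ω))) * (f τ ^ N * A ω / D)
            ≤ Fbar N (f τ * I ω) - Fbar N (f τ * (I ω + J ω)) := by
          rw [hsub, ← hpowA]
          exact hlow
        have : Real.exp (-(f τ * (I ω + J ω))) * ((f τ / τ) ^ N * A ω / D)
            = (Real.exp (-(f τ * (I ω + J ω))) * (f τ ^ N * A ω / D)) / τ ^ N := by
          rw [div_pow]
          ring
        rw [this]
        simp only [hFF]
        exact div_le_div_of_nonneg_right key (by positivity : (0:ℝ) < τ ^ N).le
      · filter_upwards [eventually_mem_nhdsWithin] with τ hτ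
        have hτ0 : (0:ℝ) < τ := hτ
        have hft : 0 ≤ f τ := hfnn τ hτ0.le
        have hab : f τ * I ω ≤ f τ * (I ω + J ω) :=
          mul_le_mul_of_nonneg_left (by linarith [hJnn ω]) hft
        have ha : 0 ≤ f τ * I ω := mul_nonneg hft (hInn ω)
        have hsub := Fbar_sub N hN ha hab
        have hup := gpdf_Ioc_upper N hN ha hab
        have hpowA : (f τ * (I ω + J ω)) ^ N - (f τ * I ω) ^ N = f τ ^ N * A ω := by
          simp only [hA, mul_pow]; ring
        have key : Fbar N (f τ * I ω) - Fbar N (f τ * (I ω + J ω)) ≤ f τ ^ N * A ω / D := by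
          rw [hsub, ← hpowA]
          exact hup
        have heq : (f τ / τ) ^ N * A ω / D = (f τ ^ N * A ω / D) / τ ^ N := by
          rw [div_pow]
          ring
        rw [heq]
        simp only [hFF]
        exact div_le_div_of_nonneg_right key (by positivity : (0:ℝ) < τ ^ N).le
  have := hdct.congr' ((eventually_mem_nhdsWithin).mono fun τ hτ => (hstep τ hτ).symm)
  convert this using 2
  rw [integral_div, MeasureTheory.integral_const_mul]
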